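/- For a weighted graph G and a vertex (u,i) of its k-spinning S_k(G) with k ≥ max w, and for any θ ∈ R^{|VG|} with lift θ^σ_{(v,j)} = θ_v, one has ∑_{(v,j) adjacent to (u,i) in S_k(G)} sin(θ^σ_{(v,j)} − θ^σ_{(u,i)}) = ∑_{v ~ u in G} w_{uv} sin(θ_v − θ_u); in particular the terms from vertices (u,j) with j ≠ i contribute zero. -/
import Mathlib


open Real Finset

/-- Adjacency of the `k`-spinning of a weighted graph with oriented weight
function `w` (each edge carries its weight in exactly one direction). -/
def spinAdj {V : Type*} (k : ℕ) (w : V → V → ℕ) (x y : V × ZMod k) : Prop :=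
  (y.2 - x.2).val < w x.1 y.1 ∨ (x.2 - y.2).val < w y.1 x.1 ∨ (x.1 = y.1 ∧ x.2 ≠ y.2)

instance {V : Type*} [DecidableEq V] (k : ℕ) (w : V → V → ℕ) (x y : V × ZMod k) :
    Decidable (spinAdj k w x y) := by unfold spinAdj; infer_instance

lemma card_val_lt (k m : ℕ) [NeZero k] (hm : m ≤ k) :
    (Finset.univ.filter fun d : ZMod k => d.val < m).card = m := by
  rw [← Finset.card_range m]
  apply Finset.card_bij (fun d _ => d.val)
  · intro a ha; simp at ha ⊢; exact ha
  · intro a ha b hb h; exact ZMod.val_injective _ h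
  · intro b hb
    simp only [Finset.mem_range] at hb
    refine ⟨(b : ZMod k), ?_, ZMod.val_cast_of_lt (lt_of_lt_of_le hb hm)⟩
    simp [ZMod.val_cast_of_lt (lt_of_lt_of_le hb hm), hb]

lemma card_sub_val_lt (k m : ℕ) [NeZero k] (hm : m ≤ k) (i : ZMod k) :
    (Finset.univ.filter fun j : ZMod k => (j - i).val < m).card = m := by
  conv_rhs => rw [← card_val_lt k m hm]
  apply Finset.card_bij (fun j _ => j - i)
  · intro a ha; simp at ha ⊢; exact ha
  · intro a _ b _ h; exact sub_left_injective h
  · intro b hb; exact ⟨b + i, by simpa using hb, by ring⟩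

lemma card_sub_val_lt' (k m : ℕ) [NeZero k] (hm : m ≤ k) (i : ZMod k) :
    (Finset.univ.filter fun j : ZMod k => (i - j).val < m).card = m := by
  conv_rhs => rw [← card_val_lt k m hm]
  apply Finset.card_bij (fun j _ => i - j)
  · intro a ha; simp at ha ⊢; exact ha
  · intro a _ b _ h
    have : i - (i - a) = i - (i - b) := by rw [h]
    simpa using this
  · intro b hb; exact ⟨i - b, by simpa using hb, by ring⟩

/-- For any vertex `(u,i)` of the `k`-spinning, the unweighted Kuramoto sum over its
neighbours at the lifted point `θ^σ` equals the weighted Kuramoto sum over the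
neighbours of `u` in `G` at `θ`; in particular the fiber terms contribute zero. -/
theorem spinning_neighbor_sum {V : Type*} [Fintype V] [DecidableEq V]
    (w : V → V → ℕ) (hdiag : ∀ v, w v v = 0)
    (horient : ∀ u v, w u v = 0 ∨ w v u = 0)
    (k : ℕ) [NeZero k] (hmax : ∀ u v, w u v ≤ k)
    (θ : V → ℝ) (u : V) (i : ZMod k) :
    (∑ y : V × ZMod k,
        (if spinAdj k w (u, i) y then Real.sin (θ y.1 - θ u) else 0)) =
      (∑ v, ((w v u + w u v : ℕ) : ℝ) * Real.sin (θ v - θ u)) ∧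
    (∑ j ∈ Finset.univ.filter (fun j : ZMod k => j ≠ i),
        Real.sin (θ u - θ u)) = 0 := by
  constructor
  · rw [Fintype.sum_prod_type]
    apply Finset.sum_congr rfl
    intro v _
    rcases eq_or_ne v u with rfl | hvu
    · simp
    · have hpred : ∀ j : ZMod k,
          spinAdj k w (u, i) (v, j) ↔ ((j - i).val < w u v ∨ (i - j).val < w v u) := by
        intro j; unfold spinAdj; simp [Ne.symm hvu]
      have hsum : (∑ j : ZMod k, (if spinAdj k w (u, i) (v, j) then Real.sin (θ v - θ u) else 0))
          = (Finset.univ.filter fun j : ZMod k => spinAdj k w (u, i) (v, j)).card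
              • Real.sin (θ v - θ u) := by
        rw [Finset.sum_ite, Finset.sum_const, Finset.sum_const_zero, add_zero]
      rw [hsum]
      rcases horient u v with h | h
      · have hfil : (Finset.univ.filter fun j : ZMod k => spinAdj k w (u, i) (v, j))
            = Finset.univ.filter (fun j : ZMod k => (i - j).val < w v u) :=
          Finset.filter_congr (fun j _ => by rw [hpred]; simp [h])
        rw [hfil, card_sub_val_lt' k (w v u) (hmax v u) i, h, nsmul_eq_mul]
        push_cast; ring
      · have hfil : (Finset.univ.filter fun j : ZMod k => spinAdj k w (u, i) (v, j))
            = Finset.univ.filter (fun j : ZMod k => (j - i).val < w u v) :=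
          Finset.filter_congr (fun j _ => by rw [hpred]; simp [h])
        rw [hfil, card_sub_val_lt k (w u v) (hmax u v) i, h, nsmul_eq_mul]
        push_cast; ring
  · simp
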